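/- Let n ≥ 2 and set n' = n/(n−1). Let N ≥ 1, let φ_1, …, φ_N : ℝ^n → ℝ be continuously differentiable functions each belonging to L^{n'}(ℝ^n), let i_1, …, i_N ∈ {1, …, n} be indices, and let c_1, …, c_N be real numbers. If the function a := Σ_{j=1}^{N} c_j · ∂φ_j/∂x_{i_j} is integrable on ℝ^n, then ∫_{ℝ^n} a(x) dx = 0. -/

import Mathlib

open MeasureTheory

open Real Filter Set Topology


lemma st_deriv_eq_zero {t : ℝ} (h : t < 0 ∨ 1 < t) : deriv Real.smoothTransition t = 0 := by
  rcases h with h | h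
  · have he : Real.smoothTransition =ᶠ[nhds t] (fun _ => (0:ℝ)) := by
      filter_upwards [Iio_mem_nhds h] with y hy
      exact Real.smoothTransition.zero_of_nonpos hy.le
    rw [he.deriv_eq]; simp
  · have he : Real.smoothTransition =ᶠ[nhds t] (fun _ => (1:ℝ)) := by
      filter_upwards [Ioi_mem_nhds h] with y hy
      exact Real.smoothTransition.one_of_one_le hy.le
    rw [he.deriv_eq]; simp

lemma st_deriv_bound : ∃ M : ℝ, 0 ≤ M ∧ ∀ t, |deriv Real.smoothTransition t| ≤ M := by
  obtain ⟨C, hC⟩ := (isCompact_Icc (a := (0:ℝ)) (b := 1)).exists_bound_of_continuousOn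
    ((Real.smoothTransition.contDiff (n := 1)).continuous_deriv le_rfl).continuousOn
  have hC0 : 0 ≤ C := le_trans (norm_nonneg _) (hC 0 (by simp))
  refine ⟨C, hC0, fun t => ?_⟩
  by_cases ht : t ∈ Icc (0:ℝ) 1
  · exact hC t ht
  · have : t < 0 ∨ 1 < t := by
      simp only [mem_Icc, not_and_or, not_le] at ht; tauto
    simpa [st_deriv_eq_zero this]


noncomputable def cutA (k : ℕ) (r : ℝ) : ℝ :=
  if Real.exp k ≤ 1 + r^2 ∧ 1 + r^2 ≤ Real.exp (2*(k:ℝ)) then |r| / (1 + r^2) else 0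

lemma cutA_nonneg (k : ℕ) (r : ℝ) : 0 ≤ cutA k r := by
  unfold cutA; split
  · positivity
  · exact le_rfl

lemma cutA_le_one (k : ℕ) (r : ℝ) : cutA k r ≤ 1 := by
  unfold cutA; split
  · rw [div_le_one (by positivity)]
    nlinarith [sq_abs r, sq_nonneg (|r| - 1), abs_nonneg r]
  · norm_num

lemma cutA_measurable (k : ℕ) : Measurable (cutA k) := by
  have hs : MeasurableSet {r : ℝ | Real.exp k ≤ 1 + r^2 ∧ 1 + r^2 ≤ Real.exp (2*(k:ℝ))} := by
    have : {r : ℝ | Real.exp k ≤ 1 + r^2 ∧ 1 + r^2 ≤ Real.exp (2*(k:ℝ))}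
        = (fun r : ℝ => 1 + r^2) ⁻¹' (Icc (Real.exp k) (Real.exp (2*(k:ℝ)))) := rfl
    rw [this]
    exact (isClosed_Icc.preimage (by continuity)).measurableSet
  exact Measurable.ite hs ((continuous_abs.measurable).div (by measurability))
    measurable_const

lemma cutA_zero_of_big {k : ℕ} {r : ℝ} (hk : 1 ≤ k) (hr : Real.exp k < r) : cutA k r = 0 := by
  unfold cutA
  rw [if_neg]
  rintro ⟨-, h2⟩
  have h0 : (0:ℝ) < Real.exp k := Real.exp_pos _
  have : Real.exp (2*(k:ℝ)) < 1 + r^2 := by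
    have : Real.exp (2*(k:ℝ)) = Real.exp k * Real.exp k := by
      rw [two_mul, Real.exp_add]
    nlinarith
  linarith

lemma cutA_radial_bound {n k : ℕ} (hn : 2 ≤ n) (hk : 1 ≤ k) :
    ∫ y in Ioi (0:ℝ), y ^ (n-1) • (cutA k y) ^ (n:ℝ) ≤ (k:ℝ) := by
  set a : ℝ := Real.sqrt (Real.exp k - 1) with ha_def
  set b : ℝ := Real.exp k with hb_def
  have hek : (2:ℝ) ≤ Real.exp k := by
    calc (2:ℝ) ≤ Real.exp 1 := by linarith [Real.add_one_le_exp 1]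
    _ ≤ Real.exp k := Real.exp_le_exp.2 (by exact_mod_cast hk)
  have ha1 : 1 ≤ a := by
    have h := Real.sqrt_le_sqrt (show (1:ℝ) ≤ Real.exp k - 1 by linarith)
    simpa [ha_def] using h
  have ha0 : 0 < a := lt_of_lt_of_le one_pos ha1
  have hb0 : (0:ℝ) < b := Real.exp_pos _
  have hab : a ≤ b := by
    have h := Real.sqrt_le_sqrt (show Real.exp k - 1 ≤ (Real.exp k)^2 by nlinarith)
    rw [Real.sqrt_sq (Real.exp_pos _).le] at h
    exact h
  have hIccInt : IntegrableOn (fun y : ℝ => y⁻¹) (Icc a b) := by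
    apply ContinuousOn.integrableOn_compact isCompact_Icc
    exact ContinuousOn.inv₀ continuousOn_id (fun y hy => (lt_of_lt_of_le ha0 hy.1).ne')
  have hIndInt : Integrable ((Icc a b).indicator (fun y : ℝ => y⁻¹))
      (volume.restrict (Ioi (0:ℝ))) := by
    rw [integrable_indicator_iff measurableSet_Icc]
    exact hIccInt.restrict
  have key : ∫ y in Ioi (0:ℝ), y ^ (n-1) • (cutA k y) ^ (n:ℝ)
      ≤ ∫ y in Ioi (0:ℝ), (Icc a b).indicator (fun y : ℝ => y⁻¹) y := by
    apply integral_mono_of_nonneg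
    · rw [Filter.EventuallyLE, ae_restrict_iff' measurableSet_Ioi]
      refine ae_of_all _ fun y hy => ?_
      have hy0 : (0:ℝ) < y := hy
      simp only [smul_eq_mul]
      exact mul_nonneg (pow_nonneg hy0.le _) (Real.rpow_nonneg (cutA_nonneg k y) _)
    · exact hIndInt
    · rw [Filter.EventuallyLE, ae_restrict_iff' measurableSet_Ioi]
      refine ae_of_all _ fun y hy => ?_
      have hy0 : (0:ℝ) < y := hy
      by_cases hS : Real.exp k ≤ 1 + y^2 ∧ 1 + y^2 ≤ Real.exp (2*(k:ℝ))
      · have hya : a ≤ y := by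
          rw [ha_def, show y = Real.sqrt (y^2) from (Real.sqrt_sq hy0.le).symm]
          exact Real.sqrt_le_sqrt (by linarith [hS.1])
        have hyb : y ≤ b := by
          have h2 : y^2 ≤ b^2 := by
            have : Real.exp (2*(k:ℝ)) = b^2 := by rw [hb_def, two_mul, Real.exp_add, sq]
            linarith [hS.2]
          nlinarith [h2, hy0.le, hb0.le]
        have hcut : cutA k y = y / (1 + y^2) := by
          unfold cutA; rw [if_pos hS, abs_of_nonneg hy0.le]
        rw [hcut, Set.indicator_of_mem (mem_Icc.2 ⟨hya, hyb⟩)]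
        have h1 : y / (1 + y^2) ≤ y / (y^2) := by
          apply div_le_div_of_nonneg_left hy0.le (by positivity) (by linarith)
        have h2 : y / (y^2) = y⁻¹ := by rw [sq]; field_simp
        have h3 : (y / (1 + y^2)) ^ (n:ℝ) ≤ (y⁻¹) ^ (n:ℝ) := by
          apply Real.rpow_le_rpow (by positivity) (h1.trans_eq h2) (by positivity)
        have h4 : (y⁻¹ : ℝ) ^ (n:ℝ) = (y ^ n)⁻¹ := by
          rw [Real.inv_rpow hy0.le, Real.rpow_natCast]
        have h5 : y ^ (n-1) * (y ^ n)⁻¹ = y⁻¹ := by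
          have hnn : y ^ n = y ^ (n-1) * y := by
            rw [← pow_succ]
            congr 1
            omega
          rw [hnn, mul_inv]
          field_simp
        calc y ^ (n-1) • (y / (1 + y^2)) ^ (n:ℝ)
            = y ^ (n-1) * (y / (1 + y^2)) ^ (n:ℝ) := by rw [smul_eq_mul]
          _ ≤ y ^ (n-1) * (y⁻¹) ^ (n:ℝ) := by
              apply mul_le_mul_of_nonneg_left h3 (by positivity)
          _ = y ^ (n-1) * (y ^ n)⁻¹ := by rw [h4]
          _ = y⁻¹ := h5
      · have hcut : cutA k y = 0 := by unfold cutA; rw [if_neg hS]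
        rw [hcut, Real.zero_rpow (Nat.cast_ne_zero.2 (by omega)), smul_zero]
        apply Set.indicator_nonneg
        intro y hy
        exact inv_nonneg.2 (le_trans ha0.le hy.1)
  have key2 : ∫ y in Ioi (0:ℝ), (Icc a b).indicator (fun y : ℝ => y⁻¹) y
      = ∫ y in Icc a b, y⁻¹ := by
    have hinter : Icc a b ∩ Ioi (0:ℝ) = Icc a b :=
      Set.inter_eq_left.2 (fun y hy => lt_of_lt_of_le ha0 hy.1)
    rw [integral_indicator measurableSet_Icc, Measure.restrict_restrict measurableSet_Icc, hinter]
  have key3 : ∫ y in Icc a b, (y:ℝ)⁻¹ = Real.log b - Real.log a := by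
    rw [integral_Icc_eq_integral_Ioc, ← intervalIntegral.integral_of_le hab,
      integral_inv (by
        rw [Set.uIcc_of_le hab]
        intro h
        exact absurd h.1 (by linarith)), Real.log_div hb0.ne' ha0.ne']
  have key4 : Real.log b - Real.log a ≤ (k:ℝ) := by
    have hlb : Real.log b = (k:ℝ) := Real.log_exp _
    have hla : 0 ≤ Real.log a := Real.log_nonneg ha1
    linarith
  calc ∫ y in Ioi (0:ℝ), y ^ (n-1) • (cutA k y) ^ (n:ℝ)
      ≤ ∫ y in Ioi (0:ℝ), (Icc a b).indicator (fun y : ℝ => y⁻¹) y := key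
    _ = Real.log b - Real.log a := by rw [key2, key3]
    _ ≤ (k:ℝ) := key4


lemma cutn_integrable {n k : ℕ} (hn : 2 ≤ n) (hk : 1 ≤ k) :
    Integrable (fun x : EuclideanSpace ℝ (Fin n) => (cutA k ‖x‖) ^ (n:ℝ)) := by
  have hmeas : AEStronglyMeasurable
      (fun x : EuclideanSpace ℝ (Fin n) => (cutA k ‖x‖) ^ (n:ℝ)) volume :=
    (((cutA_measurable k).comp measurable_norm).pow_const _).aestronglyMeasurable
  have heq : (fun x : EuclideanSpace ℝ (Fin n) => (cutA k ‖x‖) ^ (n:ℝ))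
      = (Metric.closedBall (0 : EuclideanSpace ℝ (Fin n)) (Real.exp k)).indicator
        (fun x => (cutA k ‖x‖) ^ (n:ℝ)) := by
    ext x
    by_cases hx : x ∈ Metric.closedBall (0 : EuclideanSpace ℝ (Fin n)) (Real.exp k)
    · rw [Set.indicator_of_mem hx]
    · rw [Set.indicator_of_notMem hx]
      have : Real.exp k < ‖x‖ := by
        simpa [Metric.mem_closedBall, dist_zero_right] using hx
      rw [cutA_zero_of_big hk this, Real.zero_rpow (Nat.cast_ne_zero.2 (by omega))]
  rw [heq, integrable_indicator_iff measurableSet_closedBall]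
  apply Measure.integrableOn_of_bounded (measure_closedBall_lt_top.ne) hmeas (M := 1)
  refine ae_of_all _ fun x => ?_
  rw [Real.norm_of_nonneg (Real.rpow_nonneg (cutA_nonneg k ‖x‖) _)]
  exact Real.rpow_le_one (cutA_nonneg k ‖x‖) (cutA_le_one k ‖x‖) (by positivity)

lemma cutn_integral_le {n k : ℕ} (hn : 2 ≤ n) (hk : 1 ≤ k) :
    ∫ x : EuclideanSpace ℝ (Fin n), (cutA k ‖x‖) ^ (n:ℝ)
      ≤ ((n : ℝ) * (volume (Metric.ball (0 : EuclideanSpace ℝ (Fin n)) 1)).toReal) * k := by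
  haveI : Nontrivial (EuclideanSpace ℝ (Fin n)) := by
    refine ⟨0, EuclideanSpace.single ⟨0, by omega⟩ 1, fun h => ?_⟩
    have := congrArg (fun f => ‖f‖) h
    simp [EuclideanSpace.norm_single] at this
  rw [integral_fun_norm_addHaar volume (fun r => (cutA k r) ^ (n:ℝ))]
  simp only [finrank_euclideanSpace_fin, nsmul_eq_mul, smul_eq_mul]
  rw [mul_assoc]
  apply mul_le_mul_of_nonneg_left _ (by positivity)
  apply mul_le_mul_of_nonneg_left (cutA_radial_bound hn hk) ENNReal.toReal_nonneg


variable {n : ℕ}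


lemma xi_hasFDerivAt (k : ℕ) (x : EuclideanSpace ℝ (Fin n)) :
    HasFDerivAt (fun y : EuclideanSpace ℝ (Fin n) => Real.smoothTransition (2 - (k:ℝ)⁻¹ * Real.log (1 + ‖y‖^2)))
      (-(deriv Real.smoothTransition (2 - (k:ℝ)⁻¹ * Real.log (1 + ‖x‖^2)) •
        (k:ℝ)⁻¹ • (1 + ‖x‖^2)⁻¹ • 2 • (innerSL ℝ) x)) x := by
  have hpos : (0:ℝ) < 1 + ‖x‖^2 := by positivity
  have h1 : HasFDerivAt (fun y : EuclideanSpace ℝ (Fin n) => 1 + ‖y‖^2) (2 • (innerSL ℝ) x) x :=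
    (hasStrictFDerivAt_norm_sq x).hasFDerivAt.const_add 1
  have h2 : HasFDerivAt (fun y : EuclideanSpace ℝ (Fin n) => Real.log (1 + ‖y‖^2))
      ((1 + ‖x‖^2)⁻¹ • (2 • (innerSL ℝ) x)) x := by
    exact (Real.hasDerivAt_log hpos.ne').comp_hasFDerivAt x h1
  have h3 := (h2.const_mul ((k:ℝ)⁻¹)).const_sub 2
  have h5 : HasDerivAt Real.smoothTransition
      (deriv Real.smoothTransition (2 - (k:ℝ)⁻¹ * Real.log (1 + ‖x‖^2)))
      (2 - (k:ℝ)⁻¹ * Real.log (1 + ‖x‖^2)) :=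
    ((Real.smoothTransition.contDiff (n := 1)).differentiable (by norm_num) _).hasDerivAt
  simpa [Function.comp_def, smul_smul, mul_comm, mul_assoc, mul_left_comm]
    using h5.comp_hasFDerivAt x h3

lemma xi_fderiv_apply (k : ℕ) (x u : EuclideanSpace ℝ (Fin n)) :
    fderiv ℝ (fun y : EuclideanSpace ℝ (Fin n) => Real.smoothTransition (2 - (k:ℝ)⁻¹ * Real.log (1 + ‖y‖^2))) x u
      = -(deriv Real.smoothTransition (2 - (k:ℝ)⁻¹ * Real.log (1 + ‖x‖^2)) *
          ((k:ℝ)⁻¹ * ((1 + ‖x‖^2)⁻¹ * (2 * (inner ℝ x u : ℝ))))) := by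
  rw [(xi_hasFDerivAt k x).fderiv]
  simp [mul_assoc]

/-- If `φ₁, …, φ_N : ℝⁿ → ℝ` are `C¹` functions in `L^{n'}` (`n' = n/(n-1)`),
and a linear combination `a = Σⱼ cⱼ ∂φⱼ/∂x_{iⱼ}` of their partial derivatives
is integrable, then `∫ a = 0`. -/
theorem integral_combination_of_partials_eq_zero
    (n : ℕ) (hn : 2 ≤ n) (N : ℕ) (hN : 1 ≤ N)
    (φ : Fin N → EuclideanSpace ℝ (Fin n) → ℝ)
    (hφ : ∀ j, ContDiff ℝ 1 (φ j))
    (hφLp : ∀ j, MemLp (φ j)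
      (ENNReal.ofReal ((n : ℝ) / ((n : ℝ) - 1))) volume)
    (idx : Fin N → Fin n) (c : Fin N → ℝ)
    (hint : Integrable (fun x => ∑ j : Fin N,
      c j * fderiv ℝ (φ j) x (EuclideanSpace.single (idx j) 1)) volume) :
    ∫ x : EuclideanSpace ℝ (Fin n), ∑ j : Fin N,
      c j * fderiv ℝ (φ j) x (EuclideanSpace.single (idx j) 1) = 0 := by
  obtain ⟨M, hM0, hM⟩ := st_deriv_bound
  set v : Fin N → EuclideanSpace ℝ (Fin n) :=
    fun j => EuclideanSpace.single (idx j) (1:ℝ) with hv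
  have hvnorm : ∀ j, ‖v j‖ = 1 := fun j => by
    rw [hv]; simp [EuclideanSpace.norm_single]
  set ξ : ℕ → EuclideanSpace ℝ (Fin n) → ℝ :=
    fun k x => Real.smoothTransition (2 - (k:ℝ)⁻¹ * Real.log (1 + ‖x‖^2)) with hξdef
  set A : EuclideanSpace ℝ (Fin n) → ℝ :=
    fun x => ∑ j : Fin N, c j * fderiv ℝ (φ j) x (v j) with hA
  -- basic facts
  have hnR : (2:ℝ) ≤ (n:ℝ) := by exact_mod_cast hn
  have hpos : ∀ x : EuclideanSpace ℝ (Fin n), (0:ℝ) < 1 + ‖x‖^2 := fun x => by positivity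
  have hξdiff : ∀ k, Differentiable ℝ (ξ k) := fun k x => (xi_hasFDerivAt k x).differentiableAt
  have hξC1 : ∀ k, ContDiff ℝ 1 (ξ k) := by
    intro k
    apply Real.smoothTransition.contDiff.comp
    exact contDiff_const.sub (contDiff_const.mul
      (((contDiff_const.add (contDiff_norm_sq ℝ)).log (fun x => (hpos x).ne'))))
  have hξcont : ∀ k, Continuous (ξ k) := fun k => (hξC1 k).continuous
  have hξ0 : ∀ k x, 0 ≤ ξ k x := fun k x => Real.smoothTransition.nonneg _
  have hξ1 : ∀ k x, ξ k x ≤ 1 := fun k x => Real.smoothTransition.le_one _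
  have hξsupp : ∀ k, 1 ≤ k → HasCompactSupport (ξ k) := by
    intro k hk
    apply HasCompactSupport.intro (isCompact_closedBall (0 : EuclideanSpace ℝ (Fin n))
      (Real.exp k))
    intro x hx
    have hxk : Real.exp k < ‖x‖ := by
      simpa [Metric.mem_closedBall, dist_zero_right] using hx
    have hkpos : (0:ℝ) < k := by exact_mod_cast hk
    have h1 : Real.exp (2*(k:ℝ)) < 1 + ‖x‖^2 := by
      have : Real.exp (2*(k:ℝ)) = Real.exp k * Real.exp k := by
        rw [two_mul, Real.exp_add]
      nlinarith [Real.exp_pos (k:ℝ)]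
    have h2 : 2*(k:ℝ) < Real.log (1 + ‖x‖^2) := by
      rw [← Real.log_exp (2*(k:ℝ))]
      exact Real.log_lt_log (Real.exp_pos _) h1
    have h3 : 2 - (k:ℝ)⁻¹ * Real.log (1 + ‖x‖^2) ≤ 0 := by
      have : 2 ≤ (k:ℝ)⁻¹ * Real.log (1 + ‖x‖^2) := by
        calc (2:ℝ) = (k:ℝ)⁻¹ * (2 * k) := by
              rw [inv_mul_eq_div, eq_div_iff hkpos.ne']
          _ ≤ (k:ℝ)⁻¹ * Real.log (1 + ‖x‖^2) := by
            apply mul_le_mul_of_nonneg_left h2.le (by positivity)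
      linarith
    exact Real.smoothTransition.zero_of_nonpos h3
  -- derivative bound
  have hbound : ∀ k, 1 ≤ k → ∀ x, ∀ u : EuclideanSpace ℝ (Fin n), ‖u‖ = 1 →
      ‖fderiv ℝ (ξ k) x u‖ ≤ 2*M/(k:ℝ) * cutA k ‖x‖ := by
    intro k hk x u hu
    have hkpos : (0:ℝ) < k := by exact_mod_cast hk
    rw [hξdef]
    rw [xi_fderiv_apply k x u]
    by_cases hS : Real.exp k ≤ 1 + ‖x‖^2 ∧ 1 + ‖x‖^2 ≤ Real.exp (2*(k:ℝ))
    · have hcut : cutA k ‖x‖ = ‖x‖ / (1 + ‖x‖^2) := by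
        unfold cutA
        rw [if_pos]
        · rw [abs_of_nonneg (norm_nonneg x)]
        · exact hS
      have hinner : |(inner ℝ x u : ℝ)| ≤ ‖x‖ := by
        calc |(inner ℝ x u : ℝ)| ≤ ‖x‖ * ‖u‖ := abs_real_inner_le_norm x u
          _ = ‖x‖ := by rw [hu, mul_one]
      have hd : |deriv Real.smoothTransition (2 - (k:ℝ)⁻¹ * Real.log (1 + ‖x‖^2))| ≤ M := hM _
      rw [hcut, Real.norm_eq_abs, abs_neg]
      calc |deriv Real.smoothTransition (2 - (k:ℝ)⁻¹ * Real.log (1 + ‖x‖^2)) *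
            ((k:ℝ)⁻¹ * ((1 + ‖x‖^2)⁻¹ * (2 * (inner ℝ x u : ℝ))))|
          = |deriv Real.smoothTransition (2 - (k:ℝ)⁻¹ * Real.log (1 + ‖x‖^2))| *
            ((k:ℝ)⁻¹ * ((1 + ‖x‖^2)⁻¹ * (2 * |(inner ℝ x u : ℝ)|))) := by
            rw [abs_mul]
            congr 1
            rw [abs_mul, abs_mul, abs_mul]
            rw [abs_of_nonneg (by positivity : (0:ℝ) ≤ (k:ℝ)⁻¹),
              abs_of_nonneg (le_of_lt (inv_pos.2 (hpos x))), abs_of_nonneg (by norm_num : (0:ℝ) ≤ 2)]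
        _ ≤ M * ((k:ℝ)⁻¹ * ((1 + ‖x‖^2)⁻¹ * (2 * ‖x‖))) := by
            apply mul_le_mul hd _ (by positivity) hM0
            apply mul_le_mul_of_nonneg_left _ (by positivity)
            apply mul_le_mul_of_nonneg_left _ (le_of_lt (inv_pos.2 (hpos x)))
            apply mul_le_mul_of_nonneg_left hinner (by norm_num)
        _ = 2*M/(k:ℝ) * (‖x‖ / (1 + ‖x‖^2)) := by
            field_simp
    · have ht : (2 - (k:ℝ)⁻¹ * Real.log (1 + ‖x‖^2)) < 0 ∨
          1 < (2 - (k:ℝ)⁻¹ * Real.log (1 + ‖x‖^2)) := by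
        push_neg at hS
        by_cases h1 : Real.exp k ≤ 1 + ‖x‖^2
        · left
          have h2 := hS h1
          have h3 : 2*(k:ℝ) < Real.log (1 + ‖x‖^2) := by
            rw [← Real.log_exp (2*(k:ℝ))]
            exact Real.log_lt_log (Real.exp_pos _) h2
          have : 2 < (k:ℝ)⁻¹ * Real.log (1 + ‖x‖^2) := by
            calc (2:ℝ) = (k:ℝ)⁻¹ * (2 * k) := by
                  rw [inv_mul_eq_div, eq_div_iff hkpos.ne']
              _ < (k:ℝ)⁻¹ * Real.log (1 + ‖x‖^2) := by
                apply mul_lt_mul_of_pos_left h3 (by positivity)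
          linarith
        · right
          push_neg at h1
          have h3 : Real.log (1 + ‖x‖^2) < (k:ℝ) := by
            rw [← Real.log_exp (k:ℝ)]
            exact Real.log_lt_log (hpos x) h1
          have h4 : 0 ≤ Real.log (1 + ‖x‖^2) := Real.log_nonneg (by nlinarith [sq_nonneg ‖x‖])
          have : (k:ℝ)⁻¹ * Real.log (1 + ‖x‖^2) < 1 := by
            rw [inv_mul_lt_iff₀ hkpos, mul_one]
            exact h3
          linarith
      rw [st_deriv_eq_zero ht]
      simp only [zero_mul, neg_zero, norm_zero]
      have : 0 ≤ cutA k ‖x‖ := cutA_nonneg k ‖x‖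
      positivity
  -- continuity facts
  have hφcont : ∀ j, Continuous (φ j) := fun j => (hφ j).continuous
  have hDφcont : ∀ j, Continuous (fun x => fderiv ℝ (φ j) x (v j)) := fun j =>
    ((hφ j).continuous_fderiv one_ne_zero).clm_apply continuous_const
  have hAcont : Continuous A := by
    rw [hA]
    exact continuous_finset_sum _ fun j _ => continuous_const.mul (hDφcont j)
  have hg_cont : ∀ k j, Continuous (fun x => fderiv ℝ (ξ k) x (v j)) := fun k j =>
    ((hξC1 k).continuous_fderiv one_ne_zero).clm_apply continuous_const
  have hg_supp : ∀ k, 1 ≤ k → ∀ j, HasCompactSupport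
      (fun x => fderiv ℝ (ξ k) x (v j)) := fun k hk j =>
    HasCompactSupport.fderiv_apply ℝ (hξsupp k hk) (v j)
  -- integration by parts
  have hIBP : ∀ k, 1 ≤ k → ∫ x, A x * ξ k x
      = ∑ j : Fin N, c j * (- ∫ x, φ j x * fderiv ℝ (ξ k) x (v j)) := by
    intro k hk
    have i1 : ∀ j, Integrable (fun x => fderiv ℝ (φ j) x (v j) * ξ k x) := fun j =>
      ((hDφcont j).mul (hξcont k)).integrable_of_hasCompactSupport ((hξsupp k hk).mul_left)
    have i2 : ∀ j, Integrable (fun x => φ j x * fderiv ℝ (ξ k) x (v j)) := fun j =>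
      ((hφcont j).mul (hg_cont k j)).integrable_of_hasCompactSupport
        ((hg_supp k hk j).mul_left)
    have i3 : ∀ j, Integrable (fun x => φ j x * ξ k x) := fun j =>
      ((hφcont j).mul (hξcont k)).integrable_of_hasCompactSupport ((hξsupp k hk).mul_left)
    have hterm : ∀ j, ∫ x, fderiv ℝ (φ j) x (v j) * ξ k x
        = - ∫ x, φ j x * fderiv ℝ (ξ k) x (v j) := by
      intro j
      have h := integral_mul_fderiv_eq_neg_fderiv_mul_of_integrable (i1 j) (i2 j) (i3 j)
        (fun x _ => (hφ j).differentiable one_ne_zero x) (fun x _ => hξdiff k x)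
      linarith
    calc ∫ x, A x * ξ k x
        = ∫ x, ∑ j : Fin N, c j * (fderiv ℝ (φ j) x (v j) * ξ k x) := by
          apply integral_congr_ae
          refine ae_of_all _ fun x => ?_
          simp only [hA]
          rw [Finset.sum_mul]
          apply Finset.sum_congr rfl
          intro j _
          ring
      _ = ∑ j : Fin N, ∫ x, c j * (fderiv ℝ (φ j) x (v j) * ξ k x) :=
          integral_finset_sum _ (fun j _ => (i1 j).const_mul _)
      _ = ∑ j : Fin N, c j * ∫ x, fderiv ℝ (φ j) x (v j) * ξ k x := by
          apply Finset.sum_congr rfl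
          intro j _
          rw [integral_const_mul]
      _ = ∑ j : Fin N, c j * (- ∫ x, φ j x * fderiv ℝ (ξ k) x (v j)) := by
          apply Finset.sum_congr rfl
          intro j _
          rw [hterm j]
  -- limit 1 : dominated convergence
  have hLim1 : Tendsto (fun k => ∫ x, A x * ξ k x) atTop (𝓝 (∫ x, A x)) := by
    apply tendsto_integral_of_dominated_convergence (fun x => ‖A x‖)
    · exact fun k => (hAcont.mul (hξcont k)).aestronglyMeasurable
    · exact hint.norm
    · intro k
      refine ae_of_all _ fun x => ?_
      rw [norm_mul]
      apply mul_le_of_le_one_right (norm_nonneg _)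
      rw [Real.norm_eq_abs, abs_of_nonneg (hξ0 k x)]
      exact hξ1 k x
    · refine ae_of_all _ fun x => ?_
      have hev : (fun k : ℕ => A x * ξ k x) =ᶠ[atTop] (fun _ => A x) := by
        filter_upwards [eventually_ge_atTop (max 1 ⌈Real.log (1 + ‖x‖^2)⌉₊)] with k hk
        have hk1 : 1 ≤ k := le_trans (le_max_left _ _) hk
        have hkpos : (0:ℝ) < k := by exact_mod_cast hk1
        have hlog : Real.log (1 + ‖x‖^2) ≤ (k:ℝ) := by
          calc Real.log (1 + ‖x‖^2) ≤ (⌈Real.log (1 + ‖x‖^2)⌉₊ : ℝ) := Nat.le_ceil _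
            _ ≤ (k:ℝ) := by exact_mod_cast le_trans (le_max_right _ _) hk
        have h1 : (k:ℝ)⁻¹ * Real.log (1 + ‖x‖^2) ≤ 1 := by
          rw [inv_mul_le_iff₀ hkpos, mul_one]
          exact hlog
        have : ξ k x = 1 := Real.smoothTransition.one_of_one_le (by linarith)
        rw [this, mul_one]
      exact Filter.Tendsto.congr' hev.symm tendsto_const_nhds
  -- Hoelder estimate
  have hR : ∀ j, Tendsto (fun k => ∫ x, φ j x * fderiv ℝ (ξ k) x (v j)) atTop (𝓝 0) := by
    intro j
    set p : ℝ := (n:ℝ)/((n:ℝ)-1) with hp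
    have hnpos : (0:ℝ) < (n:ℝ) := by linarith
    have hn0 : ((n:ℝ)) ≠ 0 := hnpos.ne'
    have hpq : Real.HolderConjugate p (n:ℝ) := by
      rw [Real.holderConjugate_iff]
      constructor
      · rw [hp, lt_div_iff₀ (by linarith)]
        linarith
      · rw [hp, inv_div]
        field_simp
        ring
    set Cj : ℝ := (∫ x : EuclideanSpace ℝ (Fin n), ‖φ j x‖ ^ p) ^ (1/p) with hCj
    have hCj0 : 0 ≤ Cj := by
      rw [hCj]
      apply Real.rpow_nonneg
      apply integral_nonneg
      intro x
      positivity
    set V : ℝ := (volume (Metric.ball (0 : EuclideanSpace ℝ (Fin n)) 1)).toReal with hV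
    have hV0 : 0 ≤ V := ENNReal.toReal_nonneg
    set K : ℝ := Cj * (2*M * ((n:ℝ)*V) ^ (1/(n:ℝ))) with hK
    have hK0 : 0 ≤ K := by
      rw [hK]
      apply mul_nonneg hCj0
      apply mul_nonneg (by linarith)
      exact Real.rpow_nonneg (by positivity) _
    apply squeeze_zero_norm' (a := fun k : ℕ => K * (k:ℝ) ^ ((1:ℝ)/(n:ℝ) - 1))
    · filter_upwards [eventually_ge_atTop 1] with k hk
      have hkpos : (0:ℝ) < k := by exact_mod_cast hk
      have hgLp : MemLp (fun x => fderiv ℝ (ξ k) x (v j)) (ENNReal.ofReal (n:ℝ)) volume :=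
        (hg_cont k j).memLp_of_hasCompactSupport (hg_supp k hk j)
      -- step 1+2 : Hoelder
      have step12 : ‖∫ x, φ j x * fderiv ℝ (ξ k) x (v j)‖
          ≤ Cj * (∫ x : EuclideanSpace ℝ (Fin n),
              ‖fderiv ℝ (ξ k) x (v j)‖ ^ (n:ℝ)) ^ (1/(n:ℝ)) := by
        calc ‖∫ x, φ j x * fderiv ℝ (ξ k) x (v j)‖
            ≤ ∫ x : EuclideanSpace ℝ (Fin n), ‖φ j x * fderiv ℝ (ξ k) x (v j)‖ :=
              norm_integral_le_integral_norm _
          _ = ∫ x : EuclideanSpace ℝ (Fin n), ‖φ j x‖ * ‖fderiv ℝ (ξ k) x (v j)‖ := by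
              apply integral_congr_ae
              exact ae_of_all _ fun x => norm_mul _ _
          _ ≤ Cj * (∫ x : EuclideanSpace ℝ (Fin n),
                ‖fderiv ℝ (ξ k) x (v j)‖ ^ (n:ℝ)) ^ (1/(n:ℝ)) := by
              rw [hCj]
              exact integral_mul_norm_le_Lp_mul_Lq hpq (hφLp j) hgLp
      -- step 3 : L^n bound
      have step3 : ∫ x : EuclideanSpace ℝ (Fin n), ‖fderiv ℝ (ξ k) x (v j)‖ ^ (n:ℝ)
          ≤ (2*M/(k:ℝ)) ^ (n:ℝ) * (((n:ℝ)*V) * k) := by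
        have hmono : ∫ x : EuclideanSpace ℝ (Fin n), ‖fderiv ℝ (ξ k) x (v j)‖ ^ (n:ℝ)
            ≤ ∫ x : EuclideanSpace ℝ (Fin n), (2*M/(k:ℝ)) ^ (n:ℝ) * (cutA k ‖x‖) ^ (n:ℝ) := by
          apply integral_mono_of_nonneg
          · exact ae_of_all _ fun x => Real.rpow_nonneg (norm_nonneg _) _
          · exact (cutn_integrable hn hk).const_mul _
          · refine ae_of_all _ fun x => ?_
            calc ‖fderiv ℝ (ξ k) x (v j)‖ ^ (n:ℝ)
                ≤ (2*M/(k:ℝ) * cutA k ‖x‖) ^ (n:ℝ) :=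
                  Real.rpow_le_rpow (norm_nonneg _) (hbound k hk x (v j) (hvnorm j))
                    (by positivity)
              _ = (2*M/(k:ℝ)) ^ (n:ℝ) * (cutA k ‖x‖) ^ (n:ℝ) :=
                  Real.mul_rpow (by positivity) (cutA_nonneg k ‖x‖)
        rw [integral_const_mul] at hmono
        calc ∫ x : EuclideanSpace ℝ (Fin n), ‖fderiv ℝ (ξ k) x (v j)‖ ^ (n:ℝ)
            ≤ (2*M/(k:ℝ)) ^ (n:ℝ) * ∫ x : EuclideanSpace ℝ (Fin n), (cutA k ‖x‖) ^ (n:ℝ) :=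
              hmono
          _ ≤ (2*M/(k:ℝ)) ^ (n:ℝ) * (((n:ℝ)*V) * k) := by
              apply mul_le_mul_of_nonneg_left _ (Real.rpow_nonneg (by positivity) _)
              rw [hV]
              exact cutn_integral_le hn hk
      -- step 4 : algebra
      have hn0' : (1:ℝ)/(n:ℝ) ≠ 0 := by positivity
      have step4 : ((2*M/(k:ℝ)) ^ (n:ℝ) * (((n:ℝ)*V) * k)) ^ ((1:ℝ)/(n:ℝ))
          = (2*M * ((n:ℝ)*V) ^ ((1:ℝ)/(n:ℝ))) * (k:ℝ) ^ ((1:ℝ)/(n:ℝ) - 1) := by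
        have e0 : (0:ℝ) ≤ 2*M/(k:ℝ) := by positivity
        have e1 : ((2*M/(k:ℝ)) ^ (n:ℝ)) ^ ((1:ℝ)/(n:ℝ)) = 2*M/(k:ℝ) := by
          rw [← Real.rpow_mul e0, mul_one_div, div_self hn0, Real.rpow_one]
        have e2 : (k:ℝ) ^ ((1:ℝ)/(n:ℝ) - 1) = (k:ℝ) ^ ((1:ℝ)/(n:ℝ)) * (k:ℝ)⁻¹ := by
          rw [Real.rpow_sub hkpos, Real.rpow_one, div_eq_mul_inv]
        rw [Real.mul_rpow (Real.rpow_nonneg e0 _) (by positivity), e1,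
          Real.mul_rpow (by positivity) (by positivity : (0:ℝ) ≤ (k:ℝ)), e2]
        ring
      calc ‖∫ x, φ j x * fderiv ℝ (ξ k) x (v j)‖
          ≤ Cj * (∫ x : EuclideanSpace ℝ (Fin n),
              ‖fderiv ℝ (ξ k) x (v j)‖ ^ (n:ℝ)) ^ (1/(n:ℝ)) := step12
        _ ≤ Cj * (((2*M/(k:ℝ)) ^ (n:ℝ) * (((n:ℝ)*V) * k)) ^ ((1:ℝ)/(n:ℝ))) := by
            apply mul_le_mul_of_nonneg_left _ hCj0
            rw [one_div]
            rw [show ((1:ℝ)/(n:ℝ)) = (n:ℝ)⁻¹ from one_div _] at *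
            apply Real.rpow_le_rpow _ step3 (by positivity)
            apply integral_nonneg
            intro x
            positivity
        _ = K * (k:ℝ) ^ ((1:ℝ)/(n:ℝ) - 1) := by
            rw [step4, hK]
            ring
    · have hlim : Tendsto (fun x : ℝ => x ^ ((1:ℝ)/(n:ℝ) - 1)) atTop (𝓝 0) := by
        have h := tendsto_rpow_neg_atTop (y := 1 - (1:ℝ)/(n:ℝ))
          (by
            have : (1:ℝ)/(n:ℝ) ≤ 1/2 := by
              apply div_le_div_of_nonneg_left one_pos.le (by norm_num) (by linarith) |>.trans_eq rfl
            linarith)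
        simpa [neg_sub] using h
      have h2 : Tendsto (fun k : ℕ => ((k:ℝ)) ^ ((1:ℝ)/(n:ℝ) - 1)) atTop (𝓝 0) :=
        hlim.comp (tendsto_natCast_atTop_atTop (R := ℝ))
      have := h2.const_mul K
      simpa using this
  -- conclusion
  have hLim2 : Tendsto (fun k => ∫ x, A x * ξ k x) atTop (𝓝 0) := by
    have hsum : Tendsto (fun k : ℕ => ∑ j : Fin N,
        c j * (- ∫ x, φ j x * fderiv ℝ (ξ k) x (v j))) atTop (𝓝 0) := by
      have h0 : ∀ j ∈ Finset.univ, Tendsto (fun k : ℕ =>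
          c j * (- ∫ x, φ j x * fderiv ℝ (ξ k) x (v j))) atTop (𝓝 0) := by
        intro j _
        simpa using ((hR j).neg.const_mul (c j))
      simpa using tendsto_finset_sum Finset.univ h0
    apply hsum.congr'
    filter_upwards [eventually_ge_atTop 1] with k hk
    exact (hIBP k hk).symm
  exact tendsto_nhds_unique hLim1 hLim2
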